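/- For every duplicative forest f there exist an integer d ≥ 0 and a Mockingbird term u with r_d ≼ u such that the poset D*(f) (ordered by ≪) is order-isomorphic to the poset {s : u ≼ s} (ordered by ≼). In other words, every poset D*(f) is isomorphic to a maximal interval of a Mockingbird lattice M(d). -/
import Mathlib


/-- Mockingbird terms: the constant `M`, variables `x i`, and applications. -/
inductive MTerm : Type
  | M : MTerm
  | var : ℕ → MTerm
  | app : MTerm → MTerm → MTerm
  deriving DecidableEq

/-- The one-step rewrite relation `⇒` on Mockingbird terms. -/
inductive Step : MTerm → MTerm → Prop
  | mock (t : MTerm) : Step (MTerm.app MTerm.M t) (MTerm.app t t)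
  | left {t1 t1' : MTerm} (t2 : MTerm) :
      Step t1 t1' → Step (MTerm.app t1 t2) (MTerm.app t1' t2)
  | right (t1 : MTerm) {t2 t2' : MTerm} :
      Step t2 t2' → Step (MTerm.app t1 t2) (MTerm.app t1 t2')

/-- `≼`, the reflexive-transitive closure of `⇒`. -/
def MLe : MTerm → MTerm → Prop := Relation.ReflTransGen Step

/-- `≡`, the reflexive-symmetric-transitive closure of `⇒`. -/
def MEquiv : MTerm → MTerm → Prop := Relation.EqvGen Step

/-- Strict version of `≼`. -/
def MLt (s t : MTerm) : Prop := MLe s t ∧ s ≠ t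

/-- Covering relation for `≼`. -/
def MCovBy (s t : MTerm) : Prop := MLt s t ∧ ∀ z, MLt s z → ¬ MLt z t

/-- Duplicative trees: white or black nodes with a list (forest) of children. -/
inductive DTree : Type
  | W : List DTree → DTree
  | B : List DTree → DTree

/-- The one-step relation `⋖` on duplicative forests. -/
inductive DStep : List DTree → List DTree → Prop
  | dup (g : List DTree) : DStep [DTree.W g] [DTree.B (g ++ g)]
  | white {g g' : List DTree} : DStep g g' → DStep [DTree.W g] [DTree.W g']
  | black {g g' : List DTree} : DStep g g' → DStep [DTree.B g] [DTree.B g']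
  | head {t t' : DTree} (f : List DTree) : DStep [t] [t'] → DStep (t :: f) (t' :: f)
  | tail (t : DTree) {f f' : List DTree} : DStep f f' → DStep (t :: f) (t :: f')

/-- `≪`, the reflexive-transitive closure of `⋖`. -/
def DLe : List DTree → List DTree → Prop := Relation.ReflTransGen DStep

/-- The map `fr` from Mockingbird terms to duplicative forests. -/
def fr : MTerm → List DTree
  | MTerm.M => []
  | MTerm.var _ => []
  | MTerm.app MTerm.M MTerm.M => [DTree.B []]
  | MTerm.app MTerm.M t' => [DTree.W (fr t')]
  | MTerm.app t t' => [DTree.B (fr t ++ fr t')]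

mutual
  /-- The pruning map on duplicative trees (returns a forest). -/
  def prT : DTree → List DTree
    | DTree.W g => [DTree.W (prF g)]
    | DTree.B g => prF g
  /-- The pruning map on duplicative forests. -/
  def prF : List DTree → List DTree
    | [] => []
    | t :: f => prT t ++ prF f
end

mutual
  /-- The statistic `mtStat` on duplicative trees. -/
  def mtStat : DTree → ℕ
    | DTree.W g => 2 * ml g
    | DTree.B g => ml g
  /-- Sum of `mtStat` over the trees of a forest. -/
  def mtsum : List DTree → ℕ
    | [] => 0
    | t :: f => mtStat t + mtsum f
  /-- The statistic `ml` on duplicative forests: `1 - ℓ + Σ mtStat`. -/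
  def ml : List DTree → ℕ
    | f => mtsum f + 1 - f.length
end

mutual
  /-- Number of white nodes in a duplicative tree. -/
  def whitesT : DTree → ℕ
    | DTree.W g => 1 + whitesF g
    | DTree.B g => whitesF g
  /-- Number of white nodes in a duplicative forest. -/
  def whitesF : List DTree → ℕ
    | [] => 0
    | t :: f => whitesT t + whitesF f
end

/-- Closed terms: no variables. -/
def MClosed : MTerm → Prop
  | MTerm.M => True
  | MTerm.var _ => False
  | MTerm.app a b => MClosed a ∧ MClosed b

/-- Degree: number of applications. -/
def deg : MTerm → ℕ
  | MTerm.M => 0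
  | MTerm.var _ => 0
  | MTerm.app a b => deg a + deg b + 1

/-- Subterm relation. -/
inductive Subterm : MTerm → MTerm → Prop
  | refl (t : MTerm) : Subterm t t
  | left {s a : MTerm} (b : MTerm) : Subterm s a → Subterm s (MTerm.app a b)
  | right (a : MTerm) {s b : MTerm} : Subterm s b → Subterm s (MTerm.app a b)

/-- The term `r_d`. -/
def rTerm : ℕ → MTerm
  | 0 => MTerm.M
  | d + 1 => MTerm.app MTerm.M (rTerm d)

/-- Saturated chain from `a` to `b`, given as the list of its elements. -/
def SatChain (a b : MTerm) (c : List MTerm) : Prop :=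
  List.Chain' MCovBy c ∧ c.head? = some a ∧ c.getLast? = some b

open MTerm in
/-- Inert "fully doubled" terms: `nu 0 = M`, `nu (j+1) = nu j ⋆ nu j`. -/
def nu : ℕ → MTerm
  | 0 => MTerm.M
  | j + 1 => MTerm.app (nu j) (nu j)

def IsApp : MTerm → Prop := fun t => ∃ a b, t = MTerm.app a b

lemma isApp_ne_M {t : MTerm} (h : IsApp t) : t ≠ MTerm.M := by
  obtain ⟨a, b, rfl⟩ := h; simp

lemma step_isApp_left {a b : MTerm} (h : Step a b) : IsApp a := by
  cases h <;> exact ⟨_, _, rfl⟩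

lemma step_isApp_right {a b : MTerm} (h : Step a b) : IsApp b := by
  cases h <;> exact ⟨_, _, rfl⟩

lemma mle_refl (t : MTerm) : MLe t t := Relation.ReflTransGen.refl

lemma mle_trans {a b c : MTerm} (h1 : MLe a b) (h2 : MLe b c) : MLe a c :=
  Relation.ReflTransGen.trans h1 h2

lemma mle_of_step {a b : MTerm} (h : Step a b) : MLe a b :=
  Relation.ReflTransGen.single h

lemma isApp_mle {a b : MTerm} (ha : IsApp a) (h : MLe a b) : IsApp b := by
  induction h with
  | refl => exact ha
  | tail _ hstep _ => exact step_isApp_right hstep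

lemma mle_app_left {a a' : MTerm} (b : MTerm) (h : MLe a a') :
    MLe (MTerm.app a b) (MTerm.app a' b) := by
  induction h with
  | refl => exact mle_refl _
  | tail _ hstep ih => exact ih.tail (Step.left b hstep)

lemma mle_app_right (a : MTerm) {b b' : MTerm} (h : MLe b b') :
    MLe (MTerm.app a b) (MTerm.app a b') := by
  induction h with
  | refl => exact mle_refl _
  | tail _ hstep ih => exact ih.tail (Step.right a hstep)

lemma mle_app_both {a a' b b' : MTerm} (h1 : MLe a a') (h2 : MLe b b') :
    MLe (MTerm.app a b) (MTerm.app a' b') :=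
  mle_trans (mle_app_left b h1) (mle_app_right a' h2)

lemma nu_step : ∀ {j : ℕ} {s : MTerm}, Step (nu j) s → s = nu j
  | 0, s, h => absurd (step_isApp_left h) (by rintro ⟨a, b, hb⟩; cases hb)
  | 1, s, h => by
    cases h with
    | mock t => rfl
    | left _ h => exact absurd (step_isApp_left h) (by rintro ⟨a, b, hb⟩; cases hb)
    | right _ h => exact absurd (step_isApp_left h) (by rintro ⟨a, b, hb⟩; cases hb)
  | (j+2), s, h => by
    have hj : nu (j+2) = MTerm.app (nu (j+1)) (nu (j+1)) := rfl
    rw [hj] at h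
    cases h with
    | left _ h => rw [nu_step h]; rfl
    | right _ h => rw [nu_step h]; rfl

lemma nu_mle {j : ℕ} {s : MTerm} (h : MLe (nu j) s) : s = nu j := by
  induction h with
  | refl => rfl
  | tail _ hstep ih => subst ih; exact nu_step hstep

lemma rTerm_mle_nu (j : ℕ) : MLe (rTerm j) (nu j) := by
  induction j with
  | zero => exact mle_refl _
  | succ j ih =>
    exact mle_trans (mle_of_step (Step.mock _)) (mle_app_both ih ih)

/-- If the left part is an application, the upward set of `a ⋆ b` is a product. -/
lemma appUp {A0 B0 s : MTerm} (hA : IsApp A0) (h : MLe (MTerm.app A0 B0) s) :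
    ∃ a b, s = MTerm.app a b ∧ MLe A0 a ∧ MLe B0 b := by
  induction h with
  | refl => exact ⟨A0, B0, rfl, mle_refl _, mle_refl _⟩
  | tail _ hstep ih =>
    obtain ⟨a, b, rfl, h1, h2⟩ := ih
    cases hstep with
    | mock t =>
      exact absurd (isApp_mle hA h1) (by rintro ⟨x, y, hb⟩; cases hb)
    | left _ h => exact ⟨_, b, rfl, h1.tail h, h2⟩
    | right _ h => exact ⟨a, _, rfl, h1, h2.tail h⟩

lemma app_mle_iff {A0 B0 a b : MTerm} (hA : IsApp A0) :
    MLe (MTerm.app A0 B0) (MTerm.app a b) ↔ MLe A0 a ∧ MLe B0 b := by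
  constructor
  · intro h
    obtain ⟨a', b', he, h1, h2⟩ := appUp hA h
    cases he; exact ⟨h1, h2⟩
  · rintro ⟨h1, h2⟩; exact mle_app_both h1 h2

/-- Characterization of the upward set of `M ⋆ Y` for `Y` an application. -/
lemma MUp {Y s : MTerm} (hY : IsApp Y) (h : MLe (MTerm.app MTerm.M Y) s) :
    (∃ Y', s = MTerm.app MTerm.M Y' ∧ MLe Y Y') ∨
    (∃ Y' a b, s = MTerm.app a b ∧ MLe Y Y' ∧ MLe Y' a ∧ MLe Y' b) := by
  induction h with
  | refl => exact Or.inl ⟨Y, rfl, mle_refl _⟩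
  | tail _ hstep ih =>
    rcases ih with ⟨Y', rfl, h1⟩ | ⟨Y', a, b, rfl, h1, h2, h3⟩
    · cases hstep with
      | mock t => exact Or.inr ⟨Y', Y', Y', rfl, h1, mle_refl _, mle_refl _⟩
      | left _ h => exact absurd (step_isApp_left h) (by rintro ⟨x, y, hb⟩; cases hb)
      | right _ h => exact Or.inl ⟨_, rfl, h1.tail h⟩
    · cases hstep with
      | mock t =>
        exact absurd (isApp_mle (isApp_mle hY h1) h2) (by rintro ⟨x, y, hb⟩; cases hb)
      | left _ h => exact Or.inr ⟨Y', _, b, rfl, h1, h2.tail h, h3⟩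
      | right _ h => exact Or.inr ⟨Y', a, _, rfl, h1, h2, h3.tail h⟩

lemma MUp_W_iff {Y A : MTerm} (hY : IsApp Y) :
    MLe (MTerm.app MTerm.M Y) (MTerm.app MTerm.M A) ↔ MLe Y A := by
  constructor
  · intro h
    rcases MUp hY h with ⟨Y', he, h1⟩ | ⟨Y', a, b, he, h1, h2, h3⟩
    · cases he; exact h1
    · injection he with he1 he2
      exact absurd (isApp_mle (isApp_mle hY h1) h2) (by subst he1; rintro ⟨x, y, hb⟩; cases hb)
  · intro h; exact mle_app_right _ h

lemma MUp_B_iff {Y a b : MTerm} (hY : IsApp Y) (ha : IsApp a) :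
    MLe (MTerm.app MTerm.M Y) (MTerm.app a b) ↔
      ∃ Y', MLe Y Y' ∧ MLe Y' a ∧ MLe Y' b := by
  constructor
  · intro h
    rcases MUp hY h with ⟨Y', he, h1⟩ | ⟨Y', a', b', he, h1, h2, h3⟩
    · injection he with he1 he2
      exact absurd ha (by subst he1; rintro ⟨x, y, hb⟩; cases hb)
    · injection he with he1 he2; subst he1; subst he2; exact ⟨Y', h1, h2, h3⟩
  · rintro ⟨Y', h1, h2, h3⟩
    exact mle_trans (mle_app_right _ h1)
      (mle_trans (mle_of_step (Step.mock Y')) (mle_app_both h2 h3))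

lemma dstep_nil {y : List DTree} (h : DStep [] y) : False := by cases h

lemma dstep_length {x y : List DTree} (h : DStep x y) : x.length = y.length := by
  induction h with
  | dup g => rfl
  | white _ => rfl
  | black _ => rfl
  | head f _ => rfl
  | tail t _ ih => simp [ih]

lemma dle_length {x y : List DTree} (h : DLe x y) : x.length = y.length := by
  induction h with
  | refl => rfl
  | tail _ hstep ih => exact ih.trans (dstep_length hstep)

lemma dle_nil {x : List DTree} (h : DLe [] x) : x = [] := by
  have := dle_length h
  exact (List.length_eq_zero_iff.mp this.symm)

/-- Positional characterization of a forest step. -/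
lemma dstep_pos {x y : List DTree} (h : DStep x y) :
    ∃ pre t t' post, x = pre ++ t :: post ∧ y = pre ++ t' :: post ∧ DStep [t] [t'] := by
  induction h with
  | dup g => exact ⟨[], _, _, [], rfl, rfl, DStep.dup g⟩
  | @white g g' h => exact ⟨[], _, _, [], rfl, rfl, DStep.white h⟩
  | @black g g' h => exact ⟨[], _, _, [], rfl, rfl, DStep.black h⟩
  | @head t t' f h => exact ⟨[], t, t', f, rfl, rfl, h⟩
  | @tail t f f' h ih =>
    obtain ⟨pre, a, a', post, rfl, rfl, h1⟩ := ih
    exact ⟨t :: pre, a, a', post, rfl, rfl, h1⟩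

lemma dstep_of_pos {t t' : DTree} (pre post : List DTree) (h : DStep [t] [t']) :
    DStep (pre ++ t :: post) (pre ++ t' :: post) := by
  induction pre with
  | nil => exact DStep.head post h
  | cons a pre ih => exact DStep.tail a ih

lemma dstep_cons_cases {t : DTree} {f z : List DTree} (h : DStep (t :: f) z) :
    (∃ t', z = t' :: f ∧ DStep [t] [t']) ∨ (∃ f', z = t :: f' ∧ DStep f f') := by
  obtain ⟨pre, a, a', post, h1, h2, h3⟩ := dstep_pos h
  cases pre with
  | nil =>
    simp only [List.nil_append] at h1 h2
    injection h1 with e1 e2; subst e1; subst e2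
    exact Or.inl ⟨a', h2, h3⟩
  | cons b pre =>
    simp only [List.cons_append] at h1 h2
    injection h1 with e1 e2; subst e1; subst e2
    exact Or.inr ⟨_, h2, dstep_of_pos pre post h3⟩

lemma dstep1_cases : ∀ {t : DTree} {y : List DTree}, DStep [t] y →
    (∃ g, t = DTree.W g ∧ y = [DTree.B (g ++ g)]) ∨
    (∃ g g', t = DTree.W g ∧ y = [DTree.W g'] ∧ DStep g g') ∨
    (∃ h h', t = DTree.B h ∧ y = [DTree.B h'] ∧ DStep h h') := by
  intro t y h
  generalize hx : [t] = x at h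
  induction h generalizing t with
  | dup g => injection hx with e1 _; subst e1; exact Or.inl ⟨g, rfl, rfl⟩
  | @white g g' h => injection hx with e1 _; subst e1; exact Or.inr (Or.inl ⟨g, g', rfl, rfl, h⟩)
  | @black g g' h => injection hx with e1 _; subst e1; exact Or.inr (Or.inr ⟨g, g', rfl, rfl, h⟩)
  | @head a a' f h ih =>
    injection hx with e1 e2; subst e1
    have : f = [] := e2.symm
    subst this
    exact ih rfl
  | @tail a f f' h ih =>
    injection hx with e1 e2
    subst e2
    exact absurd h dstep_nil

-- lifts of DLe through contexts
lemma dle_white {g g' : List DTree} (h : DLe g g') : DLe [DTree.W g] [DTree.W g'] := by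
  induction h with
  | refl => exact Relation.ReflTransGen.refl
  | tail _ hstep ih => exact ih.tail (DStep.white hstep)

lemma dle_black {g g' : List DTree} (h : DLe g g') : DLe [DTree.B g] [DTree.B g'] := by
  induction h with
  | refl => exact Relation.ReflTransGen.refl
  | tail _ hstep ih => exact ih.tail (DStep.black hstep)

lemma dle_tail (t : DTree) {f f' : List DTree} (h : DLe f f') : DLe (t :: f) (t :: f') := by
  induction h with
  | refl => exact Relation.ReflTransGen.refl
  | tail _ hstep ih => exact ih.tail (DStep.tail t hstep)

lemma dle_head {t t' : DTree} (f : List DTree) (h : DLe [t] [t']) : DLe (t :: f) (t' :: f) := by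
  generalize hx : [t] = x at h
  generalize hy : [t'] = y at h
  induction h generalizing t' with
  | refl => subst hx; injection hy with e _; subst e; exact Relation.ReflTransGen.refl
  | @tail b c hb hstep ih =>
    subst hx; subst hy
    -- b is a singleton since lengths are preserved
    have hb1 : b.length = 1 := by
      have := dle_length hb; simpa using this.symm
    obtain ⟨m, hm⟩ := List.length_eq_one_iff.mp hb1
    subst hm
    exact (ih rfl).tail (DStep.head f hstep)

/-- Decomposition of `DLe` from a cons. -/
lemma dle_cons_decomp {t : DTree} {f x : List DTree} (h : DLe (t :: f) x) :
    ∃ t' f', x = t' :: f' ∧ DLe [t] [t'] ∧ DLe f f' := by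
  induction h with
  | refl => exact ⟨t, f, rfl, Relation.ReflTransGen.refl, Relation.ReflTransGen.refl⟩
  | tail _ hstep ih =>
    obtain ⟨t', f', rfl, h1, h2⟩ := ih
    rcases dstep_cons_cases hstep with ⟨t'', rfl, h3⟩ | ⟨f'', rfl, h3⟩
    · exact ⟨t'', f', rfl, h1.tail h3, h2⟩
    · exact ⟨t', f'', rfl, h1, h2.tail h3⟩

lemma dle_cons_iff {t t' : DTree} {f f' : List DTree} :
    DLe (t :: f) (t' :: f') ↔ DLe [t] [t'] ∧ DLe f f' := by
  constructor
  · intro h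
    obtain ⟨a, b, he, h1, h2⟩ := dle_cons_decomp h
    injection he with e1 e2; subst e1; subst e2
    exact ⟨h1, h2⟩
  · rintro ⟨h1, h2⟩
    exact Relation.ReflTransGen.trans (dle_head f h1) (dle_tail t' h2)

/-- Decomposition of `DLe` from an append. -/
lemma dle_append_decomp : ∀ {p q x : List DTree}, DLe (p ++ q) x →
    ∃ p' q', x = p' ++ q' ∧ p'.length = p.length ∧ DLe p p' ∧ DLe q q' := by
  intro p
  induction p with
  | nil =>
    intro q x h
    exact ⟨[], x, rfl, rfl, Relation.ReflTransGen.refl, h⟩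
  | cons a p ih =>
    intro q x h
    rw [List.cons_append] at h
    obtain ⟨a', y, rfl, h1, h2⟩ := dle_cons_decomp h
    obtain ⟨p', q', rfl, hl, h3, h4⟩ := ih h2
    exact ⟨a' :: p', q', rfl, by simp [hl],
      dle_cons_iff.mpr ⟨h1, h3⟩, h4⟩

lemma dle_append_both {p p' q q' : List DTree} (h1 : DLe p p') (h2 : DLe q q') :
    DLe (p ++ q) (p' ++ q') := by
  induction p generalizing p' with
  | nil =>
    have h0 := dle_nil h1
    subst h0; simpa using h2
  | cons a p ih =>
    obtain ⟨a', pp, rfl, ha, hp⟩ := dle_cons_decomp h1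
    rw [List.cons_append, List.cons_append]
    exact dle_cons_iff.mpr ⟨ha, ih hp⟩

/-- Upward set of a singleton black tree. -/
lemma dle_B_decomp {h0 : List DTree} {x : List DTree} (h : DLe [DTree.B h0] x) :
    ∃ h', x = [DTree.B h'] ∧ DLe h0 h' := by
  induction h with
  | refl => exact ⟨h0, rfl, Relation.ReflTransGen.refl⟩
  | tail _ hstep ih =>
    obtain ⟨h', rfl, h1⟩ := ih
    rcases dstep1_cases hstep with ⟨g, he, _⟩ | ⟨g, g', he, _, _⟩ | ⟨k, k', he, hy, h2⟩
    · cases he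
    · cases he
    · injection he with e; subst e
      exact ⟨k', hy, h1.tail h2⟩

/-- Upward set of a singleton white tree. -/
lemma dle_W_decomp {g0 : List DTree} {x : List DTree} (h : DLe [DTree.W g0] x) :
    (∃ g', x = [DTree.W g'] ∧ DLe g0 g') ∨
    (∃ g' h', x = [DTree.B h'] ∧ DLe g0 g' ∧ DLe (g' ++ g') h') := by
  induction h with
  | refl => exact Or.inl ⟨g0, rfl, Relation.ReflTransGen.refl⟩
  | tail _ hstep ih =>
    rcases ih with ⟨g', rfl, h1⟩ | ⟨g', h', rfl, h1, h2⟩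
    · rcases dstep1_cases hstep with ⟨g, he, hy⟩ | ⟨g, g'', he, hy, h2⟩ | ⟨k, k', he, _, _⟩
      · injection he with e; subst e
        exact Or.inr ⟨g', _, hy, h1, Relation.ReflTransGen.refl⟩
      · injection he with e; subst e
        exact Or.inl ⟨g'', hy, h1.tail h2⟩
      · cases he
    · rcases dstep1_cases hstep with ⟨g, he, _⟩ | ⟨g, g'', he, _, _⟩ | ⟨k, k', he, hy, h3⟩
      · cases he
      · cases he
      · injection he with e; subst e
        exact Or.inr ⟨g', k', hy, h1, h2.tail h3⟩

lemma dle_B_iff {h0 h1 : List DTree} :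
    DLe [DTree.B h0] [DTree.B h1] ↔ DLe h0 h1 := by
  constructor
  · intro h
    obtain ⟨h', he, h2⟩ := dle_B_decomp h
    injection he with e _
    injection e with e; subst e
    exact h2
  · exact dle_black

lemma dle_W_W_iff {g0 g1 : List DTree} :
    DLe [DTree.W g0] [DTree.W g1] ↔ DLe g0 g1 := by
  constructor
  · intro h
    rcases dle_W_decomp h with ⟨g', he, h1⟩ | ⟨g', h', he, _, _⟩
    · injection he with e _; injection e with e; subst e; exact h1
    · injection he with e _; cases e
  · exact dle_white

lemma dle_W_B_iff {g0 h1 : List DTree} :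
    DLe [DTree.W g0] [DTree.B h1] ↔ ∃ g', DLe g0 g' ∧ DLe (g' ++ g') h1 := by
  constructor
  · intro h
    rcases dle_W_decomp h with ⟨g', he, h1⟩ | ⟨g', h', he, h2, h3⟩
    · injection he with e _; cases e
    · injection he with e _; injection e with e; subst e; exact ⟨g', h2, h3⟩
  · rintro ⟨g', h1, h2⟩
    exact Relation.ReflTransGen.trans (dle_white h1)
      (Relation.ReflTransGen.trans (Relation.ReflTransGen.single (DStep.dup g'))
        (dle_black h2))

lemma dle_B_W_false {h0 g1 : List DTree} (h : DLe [DTree.B h0] [DTree.W g1]) : False := by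
  obtain ⟨h', he, _⟩ := dle_B_decomp h
  injection he with e _; cases e

lemma equivOfRel {α β : Type} (R : α → β → Prop)
    (h1 : ∀ a, ∃! b, R a b) (h2 : ∀ b, ∃! a, R a b) :
    ∃ e : α ≃ β, ∀ a, R a (e a) := by
  classical
  refine ⟨⟨fun a => (h1 a).exists.choose, fun b => (h2 b).exists.choose, ?_, ?_⟩, ?_⟩
  · intro a
    exact (h2 ((h1 a).exists.choose)).unique
      ((h2 ((h1 a).exists.choose)).exists.choose_spec) ((h1 a).exists.choose_spec)
  · intro b
    exact (h1 ((h2 b).exists.choose)).unique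
      ((h1 ((h2 b).exists.choose)).exists.choose_spec) ((h2 b).exists.choose_spec)
  · intro a
    exact (h1 a).exists.choose_spec

/-- The packaged data: `u` is an application, reachable from `r δ`, and the
upward set of `f` is order-isomorphic to the upward set of `u`. -/
def PFd (f : List DTree) (u : MTerm) (δ : ℕ) : Prop :=
  IsApp u ∧ MLe (rTerm δ) u ∧
  ∃ φ : {f' : List DTree // DLe f f'} ≃ {s : MTerm // MLe u s},
    ∀ a b, DLe a.1 b.1 ↔ MLe (φ a).1 (φ b).1

lemma PFd.pad {f : List DTree} {u : MTerm} {δ : ℕ} (h : PFd f u δ) :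
    PFd f (MTerm.app u (nu δ)) (δ + 1) := by
  obtain ⟨hu, hr, φ, mono⟩ := h
  refine ⟨⟨_, _, rfl⟩, ?_, ?_⟩
  · exact mle_trans (mle_of_step (Step.mock _)) (mle_app_both hr (rTerm_mle_nu δ))
  · have hmem : ∀ a : {f' // DLe f f'},
        MLe (MTerm.app u (nu δ)) (MTerm.app (φ a).1 (nu δ)) :=
      fun a => mle_app_left _ (φ a).2
    obtain ⟨e, he⟩ := equivOfRel
      (R := fun (a : {f' // DLe f f'}) (s : {s // MLe (MTerm.app u (nu δ)) s}) =>
        s.1 = MTerm.app (φ a).1 (nu δ))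
      (fun a => ⟨⟨MTerm.app (φ a).1 (nu δ), hmem a⟩, rfl, fun b hb => Subtype.ext hb⟩)
      (fun s => by
        obtain ⟨x, y, hxy, hx, hy⟩ := appUp hu s.2
        have hy' := nu_mle hy
        refine ⟨φ.symm ⟨x, hx⟩, ?_, ?_⟩
        · show s.1 = _
          rw [hxy, hy', Equiv.apply_symm_apply]
        · intro a ha
          have hfa : MTerm.app (φ a).1 (nu δ) = MTerm.app x y := by rw [← ha, hxy]
          injection hfa with e1 _
          have : (⟨x, hx⟩ : {s // MLe u s}) = φ a := Subtype.ext e1.symm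
          rw [this, Equiv.symm_apply_apply])
    refine ⟨e, fun a b => ?_⟩
    rw [he a, he b]
    have hApp : IsApp (φ a).1 := isApp_mle hu (φ a).2
    rw [mono a b]
    constructor
    · intro h; exact mle_app_left _ h
    · intro h; exact (app_mle_iff hApp).mp h |>.1

lemma PFd.padTo {f : List DTree} {u : MTerm} {δ : ℕ} (h : PFd f u δ)
    {m : ℕ} (hm : δ ≤ m) : ∃ u', PFd f u' m := by
  induction m, hm using Nat.le_induction with
  | base => exact ⟨u, h⟩
  | succ m _ ih =>
    obtain ⟨u', hu'⟩ := ih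
    exact ⟨_, hu'.pad⟩

lemma buildNil : PFd [] (nu 1) 1 := by
  refine ⟨⟨MTerm.M, MTerm.M, rfl⟩, mle_refl _, ?_⟩
  obtain ⟨e, he⟩ := equivOfRel
    (R := fun (_ : {f' // DLe [] f'}) (_ : {s // MLe (nu 1) s}) => True)
    (fun a => ⟨⟨nu 1, mle_refl _⟩, trivial, fun b _ => Subtype.ext (nu_mle b.2)⟩)
    (fun b => ⟨⟨[], Relation.ReflTransGen.refl⟩, trivial,
      fun a _ => Subtype.ext (dle_nil a.2)⟩)
  refine ⟨e, fun a b => ?_⟩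
  have ha : a.1 = [] := dle_nil a.2
  have hb : b.1 = [] := dle_nil b.2
  have ha' : (e a).1 = nu 1 := nu_mle (e a).2
  have hb' : (e b).1 = nu 1 := nu_mle (e b).2
  rw [ha, hb, ha', hb']
  simp only [iff_true_intro (mle_refl (nu 1)), iff_true]
  exact Relation.ReflTransGen.refl

lemma buildB {h : List DTree} {V : MTerm} {δ : ℕ} (hd : PFd h V δ) :
    PFd [DTree.B h] V δ := by
  obtain ⟨hu, hr, φ, mono⟩ := hd
  refine ⟨hu, hr, ?_⟩
  obtain ⟨e, he⟩ := equivOfRel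
    (R := fun (a : {f' // DLe [DTree.B h] f'}) (s : {s // MLe V s}) =>
      ∃ (h' : List DTree) (hh : DLe h h'), a.1 = [DTree.B h'] ∧ s = φ ⟨h', hh⟩)
    (fun a => by
      obtain ⟨h', hx, hh⟩ := dle_B_decomp a.2
      refine ⟨φ ⟨h', hh⟩, ⟨h', hh, hx, rfl⟩, ?_⟩
      rintro b ⟨k, hk, hx2, rfl⟩
      rw [hx] at hx2
      injection hx2 with e1 _
      injection e1 with e1
      subst e1
      rfl)
    (fun s => by
      refine ⟨⟨[DTree.B (φ.symm s).1], dle_black (φ.symm s).2⟩,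
        ⟨(φ.symm s).1, (φ.symm s).2, rfl, by simp⟩, ?_⟩
      rintro a ⟨k, hk, hx2, rfl⟩
      apply Subtype.ext
      rw [hx2]
      congr 1
      have : φ.symm (φ ⟨k, hk⟩) = ⟨k, hk⟩ := φ.symm_apply_apply _
      rw [this])
  refine ⟨e, fun a b => ?_⟩
  obtain ⟨ha', hha, hxa, hsa⟩ := he a
  obtain ⟨hb', hhb, hxb, hsb⟩ := he b
  rw [hxa, hxb, hsa, hsb, dle_B_iff]
  exact mono ⟨ha', hha⟩ ⟨hb', hhb⟩

lemma buildCons {t : DTree} {f : List DTree} {u1 u2 : MTerm} {δ1 δ2 : ℕ}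
    (h1 : PFd [t] u1 δ1) (h2 : PFd f u2 δ2) :
    ∃ u δ, PFd (t :: f) u δ := by
  obtain ⟨u1', hd1⟩ := h1.padTo (le_max_left δ1 δ2)
  obtain ⟨u2', hd2⟩ := h2.padTo (le_max_right δ1 δ2)
  obtain ⟨hA1, hr1, φ1, mono1⟩ := hd1
  obtain ⟨hA2, hr2, φ2, mono2⟩ := hd2
  refine ⟨MTerm.app u1' u2', max δ1 δ2 + 1, ⟨_, _, rfl⟩, ?_, ?_⟩
  · exact mle_trans (mle_of_step (Step.mock _)) (mle_app_both hr1 hr2)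
  · obtain ⟨e, he⟩ := equivOfRel
      (R := fun (a : {f' // DLe (t :: f) f'}) (s : {s // MLe (MTerm.app u1' u2') s}) =>
        ∃ (t' : DTree) (f'' : List DTree) (ht : DLe [t] [t']) (hf : DLe f f''),
          a.1 = t' :: f'' ∧ s.1 = MTerm.app (φ1 ⟨[t'], ht⟩).1 (φ2 ⟨f'', hf⟩).1)
      (fun a => by
        obtain ⟨t', f'', hx, ht, hf⟩ := dle_cons_decomp a.2
        refine ⟨⟨MTerm.app (φ1 ⟨[t'], ht⟩).1 (φ2 ⟨f'', hf⟩).1,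
          mle_app_both (φ1 ⟨[t'], ht⟩).2 (φ2 ⟨f'', hf⟩).2⟩,
          ⟨t', f'', ht, hf, hx, rfl⟩, ?_⟩
        rintro s ⟨t2, f2, ht2, hf2, hx2, hs2⟩
        rw [hx] at hx2
        injection hx2 with e1 e2
        subst e1; subst e2
        exact Subtype.ext hs2)
      (fun s => by
        obtain ⟨c, d, hcd, hc, hd⟩ := appUp hA1 s.2
        set x1 := φ1.symm ⟨c, hc⟩ with hx1def
        set x2 := φ2.symm ⟨d, hd⟩ with hx2def
        have hlen : x1.1.length = 1 := by
          have := dle_length x1.2; simpa using this.symm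
        obtain ⟨t', hx1⟩ := List.length_eq_one_iff.mp hlen
        have ht' : DLe [t] [t'] := by rw [← hx1]; exact x1.2
        refine ⟨⟨t' :: x2.1, dle_cons_iff.mpr ⟨ht', x2.2⟩⟩,
          ⟨t', x2.1, ht', x2.2, rfl, ?_⟩, ?_⟩
        · have e1 : (⟨[t'], ht'⟩ : {f' // DLe [t] f'}) = x1 := Subtype.ext hx1.symm
          have e2 : (⟨x2.1, x2.2⟩ : {f' // DLe f f'}) = x2 := Subtype.ext rfl
          rw [e1, e2, hx1def, hx2def, Equiv.apply_symm_apply, Equiv.apply_symm_apply, hcd]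
        · rintro a ⟨t2, f2, ht2, hf2, hxa, hsa⟩
          apply Subtype.ext
          rw [hxa]
          have hsa' : MTerm.app (φ1 ⟨[t2], ht2⟩).1 (φ2 ⟨f2, hf2⟩).1 = MTerm.app c d := by
            rw [← hsa, hcd]
          injection hsa' with e1 e2
          have he1 : φ1 ⟨[t2], ht2⟩ = ⟨c, hc⟩ := Subtype.ext e1
          have he2 : φ2 ⟨f2, hf2⟩ = ⟨d, hd⟩ := Subtype.ext e2
          have h1' : (⟨[t2], ht2⟩ : {f' // DLe [t] f'}) = x1 := by
            rw [hx1def, ← he1, Equiv.symm_apply_apply]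
          have h2' : (⟨f2, hf2⟩ : {f' // DLe f f'}) = x2 := by
            rw [hx2def, ← he2, Equiv.symm_apply_apply]
          have e3 : [t2] = x1.1 := congrArg Subtype.val h1'
          rw [hx1] at e3
          injection e3 with e3 _
          rw [e3]
          congr 1
          exact congrArg Subtype.val h2')
    refine ⟨e, fun a b => ?_⟩
    obtain ⟨ta, fa, hta, hfa, hxa, hsa⟩ := he a
    obtain ⟨tb, fb, htb, hfb, hxb, hsb⟩ := he b
    rw [hxa, hxb, hsa, hsb, dle_cons_iff]
    rw [mono1 ⟨[ta], hta⟩ ⟨[tb], htb⟩, mono2 ⟨fa, hfa⟩ ⟨fb, hfb⟩]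
    exact (app_mle_iff (isApp_mle hA1 (φ1 ⟨[ta], hta⟩).2)).symm

lemma dle_append_iff_of_len {p p' q q' : List DTree} (hl : p.length = p'.length) :
    DLe (p ++ q) (p' ++ q') ↔ DLe p p' ∧ DLe q q' := by
  constructor
  · intro h
    obtain ⟨p'', q'', he, hlen, hp, hq⟩ := dle_append_decomp h
    obtain ⟨e1, e2⟩ := List.append_inj he.symm (by omega)
    subst e1; subst e2
    exact ⟨hp, hq⟩
  · rintro ⟨hp, hq⟩; exact dle_append_both hp hq

lemma buildW {g : List DTree} {Y : MTerm} {δg : ℕ} (hd : PFd g Y δg) :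
    PFd [DTree.W g] (MTerm.app MTerm.M Y) (δg + 1) := by
  obtain ⟨hY, hr, θ, mono⟩ := hd
  have hθapp : ∀ x : {f' // DLe g f'}, IsApp (θ x).1 := fun x => isApp_mle hY (θ x).2
  have hθM : ∀ x : {f' // DLe g f'}, (θ x).1 ≠ MTerm.M := fun x => isApp_ne_M (hθapp x)
  refine ⟨⟨_, _, rfl⟩, mle_app_right _ hr, ?_⟩
  obtain ⟨e, he⟩ := equivOfRel
    (R := fun (a : {f' // DLe [DTree.W g] f'}) (s : {s // MLe (MTerm.app MTerm.M Y) s}) =>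
      (∃ (g' : List DTree) (hh : DLe g g'), a.1 = [DTree.W g'] ∧
        s.1 = MTerm.app MTerm.M (θ ⟨g', hh⟩).1) ∨
      (∃ (h1 h2 : List DTree) (hh1 : DLe g h1) (hh2 : DLe g h2),
        a.1 = [DTree.B (h1 ++ h2)] ∧ h1.length = g.length ∧
        s.1 = MTerm.app (θ ⟨h1, hh1⟩).1 (θ ⟨h2, hh2⟩).1))
    (fun a => by
      rcases dle_W_decomp a.2 with ⟨g', hx, hh⟩ | ⟨g', h', hx, hg', hh'⟩
      · refine ⟨⟨MTerm.app MTerm.M (θ ⟨g', hh⟩).1, mle_app_right _ (θ ⟨g', hh⟩).2⟩,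
          Or.inl ⟨g', hh, hx, rfl⟩, ?_⟩
        rintro s (⟨g2, hh2, hx2, hs2⟩ | ⟨h1, h2, hh1, hh2, hx2, _, hs2⟩)
        · rw [hx] at hx2
          injection hx2 with e1 _
          injection e1 with e1
          subst e1
          exact Subtype.ext hs2
        · rw [hx] at hx2
          injection hx2 with e1 _
          cases e1
      · -- a.1 = [B h'], with DLe g g' and DLe (g'++g') h'
        obtain ⟨p, q, rfl, hlen, hp, hq⟩ := dle_append_decomp hh'
        have hgp : DLe g p := Relation.ReflTransGen.trans hg' hp
        have hgq : DLe g q := Relation.ReflTransGen.trans hg' hq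
        have hplen : p.length = g.length := by
          have := dle_length hg'; omega
        refine ⟨⟨MTerm.app (θ ⟨p, hgp⟩).1 (θ ⟨q, hgq⟩).1, ?_⟩,
          Or.inr ⟨p, q, hgp, hgq, hx, hplen, rfl⟩, ?_⟩
        · exact mle_trans (mle_app_right _ (θ ⟨g', hg'⟩).2)
            (mle_trans (mle_of_step (Step.mock _))
              (mle_app_both ((mono ⟨g', hg'⟩ ⟨p, hgp⟩).mp hp)
                ((mono ⟨g', hg'⟩ ⟨q, hgq⟩).mp hq)))
        · rintro s (⟨g2, hh2, hx2, hs2⟩ | ⟨k1, k2, hk1, hk2, hx2, hklen, hs2⟩)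
          · rw [hx] at hx2
            injection hx2 with e1 _
            cases e1
          · rw [hx] at hx2
            injection hx2 with e1 _
            injection e1 with e1
            obtain ⟨e2, e3⟩ := List.append_inj e1 (by omega)
            subst e2; subst e3
            exact Subtype.ext hs2)
    (fun s => by
      rcases MUp hY s.2 with ⟨Y', hs, hYY'⟩ | ⟨Y', A, B, hs, hYY', hA, hB⟩
      · set xg := θ.symm ⟨Y', hYY'⟩ with hxg
        refine ⟨⟨[DTree.W xg.1], dle_white xg.2⟩, Or.inl ⟨xg.1, xg.2, rfl, ?_⟩, ?_⟩
        · have : (⟨xg.1, xg.2⟩ : {f' // DLe g f'}) = xg := Subtype.ext rfl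
          rw [this, hxg, Equiv.apply_symm_apply, hs]
        · rintro a (⟨g2, hh2, hx2, hs2⟩ | ⟨k1, k2, hk1, hk2, hx2, hklen, hs2⟩)
          · rw [hs] at hs2
            injection hs2 with _ e2
            have : θ ⟨g2, hh2⟩ = ⟨Y', hYY'⟩ := Subtype.ext e2.symm
            have e3 : (⟨g2, hh2⟩ : {f' // DLe g f'}) = xg := by
              rw [hxg, ← this, Equiv.symm_apply_apply]
            have e4 : g2 = xg.1 := congrArg Subtype.val e3
            apply Subtype.ext
            rw [hx2, e4]
          · rw [hs] at hs2
            injection hs2 with e2 _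
            exact absurd e2.symm (hθM _)
      · have hAY : MLe Y A := mle_trans hYY' hA
        have hBY : MLe Y B := mle_trans hYY' hB
        set xa := θ.symm ⟨A, hAY⟩ with hxa
        set xb := θ.symm ⟨B, hBY⟩ with hxb
        set xc := θ.symm ⟨Y', hYY'⟩ with hxc
        have hca : DLe xc.1 xa.1 := by
          refine (mono xc xa).mpr ?_
          rw [hxa, hxc, Equiv.apply_symm_apply, Equiv.apply_symm_apply]
          exact hA
        have hcb : DLe xc.1 xb.1 := by
          refine (mono xc xb).mpr ?_
          rw [hxb, hxc, Equiv.apply_symm_apply, Equiv.apply_symm_apply]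
          exact hB
        have hmem : DLe [DTree.W g] [DTree.B (xa.1 ++ xb.1)] :=
          dle_W_B_iff.mpr ⟨xc.1, xc.2, dle_append_both hca hcb⟩
        have hlen : xa.1.length = g.length := (dle_length xa.2).symm
        refine ⟨⟨[DTree.B (xa.1 ++ xb.1)], hmem⟩,
          Or.inr ⟨xa.1, xb.1, xa.2, xb.2, rfl, hlen, ?_⟩, ?_⟩
        · have e1 : (⟨xa.1, xa.2⟩ : {f' // DLe g f'}) = xa := Subtype.ext rfl
          have e2 : (⟨xb.1, xb.2⟩ : {f' // DLe g f'}) = xb := Subtype.ext rfl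
          rw [e1, e2, hxa, hxb, Equiv.apply_symm_apply, Equiv.apply_symm_apply, hs]
        · rintro a (⟨g2, hh2, hx2, hs2⟩ | ⟨k1, k2, hk1, hk2, hx2, hklen, hs2⟩)
          · rw [hs] at hs2
            injection hs2 with e2 _
            exact absurd e2 (isApp_ne_M (isApp_mle hY hAY))
          · rw [hs] at hs2
            injection hs2 with e2 e3
            have hk1' : (⟨k1, hk1⟩ : {f' // DLe g f'}) = xa := by
              rw [hxa]
              have : θ ⟨k1, hk1⟩ = ⟨A, hAY⟩ := Subtype.ext e2.symm
              rw [← this, Equiv.symm_apply_apply]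
            have hk2' : (⟨k2, hk2⟩ : {f' // DLe g f'}) = xb := by
              rw [hxb]
              have : θ ⟨k2, hk2⟩ = ⟨B, hBY⟩ := Subtype.ext e3.symm
              rw [← this, Equiv.symm_apply_apply]
            have e4 : k1 = xa.1 := congrArg Subtype.val hk1'
            have e5 : k2 = xb.1 := congrArg Subtype.val hk2'
            apply Subtype.ext
            rw [hx2, e4, e5])
  refine ⟨e, fun a b => ?_⟩
  rcases he a with ⟨ga, hha, hxa, hsa⟩ | ⟨h1, h2, hh1, hh2, hxa, hlen1, hsa⟩ <;>
    rcases he b with ⟨gb, hhb, hxb, hsb⟩ | ⟨k1, k2, hk1, hk2, hxb, hlen2, hsb⟩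
  · -- W W
    rw [hxa, hxb, hsa, hsb, dle_W_W_iff, MUp_W_iff (hθapp _)]
    exact mono ⟨ga, hha⟩ ⟨gb, hhb⟩
  · -- W B
    rw [hxa, hxb, hsa, hsb, dle_W_B_iff, MUp_B_iff (hθapp _) (hθapp _)]
    constructor
    · rintro ⟨g', hg1, hg2⟩
      have hgg' : DLe g g' := Relation.ReflTransGen.trans hha hg1
      have hlg : g'.length = k1.length := by
        have e1 := dle_length hgg'
        omega
      obtain ⟨hp, hq⟩ := (dle_append_iff_of_len hlg).mp hg2
      exact ⟨(θ ⟨g', hgg'⟩).1, (mono ⟨ga, hha⟩ ⟨g', hgg'⟩).mp hg1,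
        (mono ⟨g', hgg'⟩ ⟨k1, hk1⟩).mp hp, (mono ⟨g', hgg'⟩ ⟨k2, hk2⟩).mp hq⟩
    · rintro ⟨Y', m1, m2, m3⟩
      have hYY' : MLe Y Y' := mle_trans (θ ⟨ga, hha⟩).2 m1
      set xc := θ.symm ⟨Y', hYY'⟩ with hxc
      have hθxc : θ xc = ⟨Y', hYY'⟩ := by rw [hxc, Equiv.apply_symm_apply]
      refine ⟨xc.1, (mono ⟨ga, hha⟩ xc).mpr (by rw [hθxc]; exact m1), ?_⟩
      have hclen : xc.1.length = k1.length := by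
        have := dle_length xc.2; omega
      refine (dle_append_iff_of_len hclen).mpr
        ⟨(mono xc ⟨k1, hk1⟩).mpr (by rw [hθxc]; exact m2),
         (mono xc ⟨k2, hk2⟩).mpr (by rw [hθxc]; exact m3)⟩
  · -- B W : both false
    rw [hxa, hxb, hsa, hsb]
    constructor
    · intro h; exact absurd h dle_B_W_false
    · intro h
      have := (app_mle_iff (hθapp _)).mp h
      exact absurd (isApp_mle (hθapp _) this.1) (by rintro ⟨x, y, hxy⟩; cases hxy)
  · -- B B
    rw [hxa, hxb, hsa, hsb, dle_B_iff, app_mle_iff (hθapp _),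
      dle_append_iff_of_len (by omega : h1.length = k1.length)]
    rw [mono ⟨h1, hh1⟩ ⟨k1, hk1⟩, mono ⟨h2, hh2⟩ ⟨k2, hk2⟩]

lemma dtree_sizeOf_pos (t : DTree) : 1 ≤ sizeOf t := by
  cases t <;> simp

theorem duplicative_poset_iso_mockingbird_interval' (f : List DTree) :
    ∃ (d : ℕ) (u : MTerm), MLe (rTerm d) u ∧
      ∃ φ : {f' : List DTree // DLe f f'} ≃ {s : MTerm // MLe u s},
        ∀ a b : {f' : List DTree // DLe f f'},
          DLe a.1 b.1 ↔ MLe (φ a).1 (φ b).1 := by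
  suffices h : ∃ u δ, PFd f u δ by
    obtain ⟨u, δ, _, hr, φ, mono⟩ := h
    exact ⟨δ, u, hr, φ, mono⟩
  suffices H : ∀ (n : ℕ) (f : List DTree), sizeOf f ≤ n → ∃ u δ, PFd f u δ from
    H (sizeOf f) f le_rfl
  intro n
  induction n with
  | zero =>
    intro f hf
    exfalso
    cases f <;> simp at hf
  | succ n ih =>
    intro f hf
    match f with
    | [] => exact ⟨nu 1, 1, buildNil⟩
    | t :: f' =>
      have hst : 1 ≤ sizeOf t := dtree_sizeOf_pos t
      have hsz : sizeOf (t :: f') = 1 + sizeOf t + sizeOf f' := List.cons.sizeOf_spec t f'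
      have hf' : sizeOf f' ≤ n := by omega
      obtain ⟨u2, δ2, hd2⟩ := ih f' hf'
      have ht : ∃ u δ, PFd [t] u δ := by
        match t with
        | DTree.W g =>
          have hg : sizeOf g ≤ n := by
            have h2 : sizeOf (DTree.W g) = 1 + sizeOf g := DTree.W.sizeOf_spec g
            omega
          obtain ⟨Y, δg, hdg⟩ := ih g hg
          exact ⟨_, _, buildW hdg⟩
        | DTree.B h =>
          have hg : sizeOf h ≤ n := by
            have h2 : sizeOf (DTree.B h) = 1 + sizeOf h := DTree.B.sizeOf_spec h
            omega
          obtain ⟨V, δh, hdh⟩ := ih h hg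
          exact ⟨V, δh, buildB hdh⟩
      obtain ⟨u1, δ1, hd1⟩ := ht
      exact buildCons hd1 hd2

/-- every poset `D*(f)` is order-isomorphic to a maximal interval
`{s : u ≼ s}` of a Mockingbird lattice `M(d)`, i.e. for some `d` and some `u` with
`r_d ≼ u`. -/
theorem duplicative_poset_iso_mockingbird_interval (f : List DTree) :
    ∃ (d : ℕ) (u : MTerm), MLe (rTerm d) u ∧
      ∃ φ : {f' : List DTree // DLe f f'} ≃ {s : MTerm // MLe u s},
        ∀ a b : {f' : List DTree // DLe f f'},
          DLe a.1 b.1 ↔ MLe (φ a).1 (φ b).1 := duplicative_poset_iso_mockingbird_interval' f
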